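/- Characterization of ε-interleaving for weighted graphs: let (X,f) and (X',g) be weighted graphs with isomorphic underlying graphs and induced sublevel filtrations F and G. Then F and G are ε-interleaved if and only if there exists a graph isomorphism φ : X → X' with sup_{x ∈ X} |f(x) − g(φ(x))| ≤ ε. -/

import Mathlib

/-- A weighted graph: a finite simple graph with weights on vertices and edges such
that the weight of a vertex is at most the weight of any incident edge. -/
structure WeightedGraph where
  V : Type
  [fin : Fintype V]
  G : SimpleGraph V
  fv : V → ℝ
  fe : Sym2 V → ℝ
  compat : ∀ e ∈ G.edgeSet, ∀ v ∈ e, fv v ≤ fe e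

attribute [instance] WeightedGraph.fin

/-- The sublevel filtration of a weighted graph, as a subgraph at each level. -/
def WeightedGraph.filt (W : WeightedGraph) (u : ℝ) : W.G.Subgraph where
  verts := {v | W.fv v ≤ u}
  Adj a b := W.G.Adj a b ∧ W.fe s(a, b) ≤ u
  adj_sub h := h.1
  edge_vert h := le_trans
    (W.compat _ ((W.G.mem_edgeSet).mpr h.1) _ (Sym2.mem_mk_left _ _)) h.2
  symm := ⟨fun a b h => ⟨h.1.symm, by rw [Sym2.eq_swap]; exact h.2⟩⟩

theorem WeightedGraph.filt_mono (W : WeightedGraph) {u v : ℝ} (h : u ≤ v) :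
    W.filt u ≤ W.filt v :=
  ⟨fun x hv => (le_trans (hv : W.fv x ≤ u) h : W.fv x ≤ v), by
    intro a b hab
    have hab' : W.G.Adj a b ∧ W.fe s(a, b) ≤ u := hab
    exact (⟨hab'.1, le_trans hab'.2 h⟩ : W.G.Adj a b ∧ W.fe s(a, b) ≤ v)⟩

/-- An `ε`-interleaving between the sublevel filtrations of two weighted graphs:
families of injective graph homomorphisms commuting with the inclusions. -/
structure GInterleaving (W W' : WeightedGraph) (ε : ℝ) where
  hε : 0 ≤ ε
  φ : ∀ w : ℝ, (W.filt w).coe →g (W'.filt (w + ε)).coe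
  ψ : ∀ w : ℝ, (W'.filt w).coe →g (W.filt (w + ε)).coe
  injφ : ∀ w, Function.Injective (φ w)
  injψ : ∀ w, Function.Injective (ψ w)
  comm1 : ∀ w : ℝ, (ψ (w + ε)).comp (φ w) =
    SimpleGraph.Subgraph.inclusion (W.filt_mono (by linarith : w ≤ w + ε + ε))
  comm2 : ∀ w : ℝ, (φ (w + ε)).comp (ψ w) =
    SimpleGraph.Subgraph.inclusion (W'.filt_mono (by linarith : w ≤ w + ε + ε))
  nat1 : ∀ (a b : ℝ) (h : a ≤ b),
    (φ b).comp (SimpleGraph.Subgraph.inclusion (W.filt_mono h)) =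
      (SimpleGraph.Subgraph.inclusion
        (W'.filt_mono (by linarith : a + ε ≤ b + ε))).comp (φ a)
  nat2 : ∀ (a b : ℝ) (h : a ≤ b),
    (ψ b).comp (SimpleGraph.Subgraph.inclusion (W'.filt_mono h)) =
      (SimpleGraph.Subgraph.inclusion
        (W.filt_mono (by linarith : a + ε ≤ b + ε))).comp (ψ a)

/-- Auxiliary: a graph isomorphism with controlled weight increase induces a
homomorphism between the sublevel filtrations at shifted levels. -/
def mkHom (W W' : WeightedGraph) (ε : ℝ) (φ : W.G ≃g W'.G)
    (hv : ∀ v, W'.fv (φ v) ≤ W.fv v + ε)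
    (he : ∀ a b, W.G.Adj a b → W'.fe s(φ a, φ b) ≤ W.fe s(a, b) + ε)
    (w : ℝ) : (W.filt w).coe →g (W'.filt (w + ε)).coe where
  toFun x := ⟨φ x.1, le_trans (hv x.1) (add_le_add x.2 (le_refl ε))⟩
  map_rel' := by
    rintro ⟨a, ha⟩ ⟨b, hb⟩ ⟨hab, hew⟩
    exact ⟨φ.map_rel_iff.2 hab, le_trans (he a b hab) (add_le_add hew (le_refl ε))⟩

/-- for weighted graphs with isomorphic underlying graphs, the
sublevel filtrations are `ε`-interleaved iff there is a graph isomorphism moving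
every weight by at most `ε`. -/
theorem weightedGraph_interleaving_iff (W W' : WeightedGraph) (ε : ℝ) (hε : 0 ≤ ε)
    (hiso : Nonempty (W.G ≃g W'.G)) :
    Nonempty (GInterleaving W W' ε) ↔
      ∃ φ : W.G ≃g W'.G, (∀ v : W.V, |W.fv v - W'.fv (φ v)| ≤ ε) ∧
        ∀ e ∈ W.G.edgeSet, |W.fe e - W'.fe (Sym2.map φ e)| ≤ ε := by
  constructor
  · rintro ⟨I⟩
    obtain ⟨M, hM⟩ := Finite.exists_le
      (Sum.elim (Sum.elim W.fv W.fe) (Sum.elim W'.fv W'.fe))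
    have hMv : ∀ v, W.fv v ≤ M := fun v => hM (Sum.inl (Sum.inl v))
    have hMe : ∀ e, W.fe e ≤ M := fun e => hM (Sum.inl (Sum.inr e))
    have hMv' : ∀ v, W'.fv v ≤ M := fun v => hM (Sum.inr (Sum.inl v))
    have hMe' : ∀ e, W'.fe e ≤ M := fun e => hM (Sum.inr (Sum.inr e))
    -- level independence of the vertex maps
    have natφ : ∀ (a b : ℝ) (h : a ≤ b) (v : W.V) (hv : W.fv v ≤ a),
        ((I.φ b) ⟨v, le_trans hv h⟩ : W'.V) = ((I.φ a) ⟨v, hv⟩ : W'.V) := by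
      intro a b h v hv
      have h2 := DFunLike.congr_fun (I.nat1 a b h)
        (⟨v, hv⟩ : ((W.filt a).verts))
      exact congrArg Subtype.val h2
    have natψ : ∀ (a b : ℝ) (h : a ≤ b) (v : W'.V) (hv : W'.fv v ≤ a),
        ((I.ψ b) ⟨v, le_trans hv h⟩ : W.V) = ((I.ψ a) ⟨v, hv⟩ : W.V) := by
      intro a b h v hv
      have h2 := DFunLike.congr_fun (I.nat2 a b h)
        (⟨v, hv⟩ : ((W'.filt a).verts))
      exact congrArg Subtype.val h2
    set Φf : W.V → W'.V := fun v => ((I.φ M) ⟨v, hMv v⟩ : W'.V) with hΦf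
    set Ψf : W'.V → W.V := fun v => ((I.ψ M) ⟨v, hMv' v⟩ : W.V) with hΨf
    have hME : M ≤ M + ε := by linarith
    have linv : ∀ v : W.V, Ψf (Φf v) = v := by
      intro v
      have h1 : Ψf (Φf v) = ((I.ψ (M + ε)) ⟨Φf v, le_trans (hMv' _) hME⟩ : W.V) :=
        (natψ M (M + ε) hME (Φf v) (hMv' _)).symm
      have h2 := DFunLike.congr_fun (I.comm1 M) (⟨v, hMv v⟩ : ((W.filt M).verts))
      have h3 : ((I.ψ (M + ε)) ((I.φ M) ⟨v, hMv v⟩) : W.V) = v :=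
        congrArg Subtype.val h2
      rw [h1]
      exact h3
    have rinv : ∀ v : W'.V, Φf (Ψf v) = v := by
      intro v
      have h1 : Φf (Ψf v) = ((I.φ (M + ε)) ⟨Ψf v, le_trans (hMv _) hME⟩ : W'.V) :=
        (natφ M (M + ε) hME (Ψf v) (hMv _)).symm
      have h2 := DFunLike.congr_fun (I.comm2 M) (⟨v, hMv' v⟩ : ((W'.filt M).verts))
      have h3 : ((I.φ (M + ε)) ((I.ψ M) ⟨v, hMv' v⟩) : W'.V) = v :=
        congrArg Subtype.val h2
      rw [h1]
      exact h3
    have Φadj : ∀ a b : W.V, W.G.Adj a b → W'.G.Adj (Φf a) (Φf b) := by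
      intro a b hab
      have h1 : (W.filt M).coe.Adj ⟨a, hMv a⟩ ⟨b, hMv b⟩ := ⟨hab, hMe _⟩
      exact ((I.φ M).map_rel h1).1
    have Ψadj : ∀ a b : W'.V, W'.G.Adj a b → W.G.Adj (Ψf a) (Ψf b) := by
      intro a b hab
      have h1 : (W'.filt M).coe.Adj ⟨a, hMv' a⟩ ⟨b, hMv' b⟩ := ⟨hab, hMe' _⟩
      exact ((I.ψ M).map_rel h1).1
    refine ⟨⟨⟨Φf, Ψf, linv, rinv⟩, ?_⟩, ?_, ?_⟩
    · intro a b
      constructor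
      · intro h
        have := Ψadj _ _ h
        simp only [Equiv.coe_fn_mk] at this
        rwa [linv, linv] at this
      · exact Φadj a b
    · -- vertex bounds
      intro v
      simp only [RelIso.coe_fn_mk, Equiv.coe_fn_mk]
      have hrefl : W'.fv (Φf v) ≤ W'.fv (Φf v) := le_refl _
      have hrefl2 : W.fv v ≤ W.fv v := le_refl _
      rw [abs_sub_le_iff]
      constructor
      · -- W.fv v ≤ W'.fv (Φf v) + ε
        have hval : ((I.ψ M) ⟨Φf v, hMv' _⟩ : W.V)
            = ((I.ψ (W'.fv (Φf v))) ⟨Φf v, hrefl⟩ : W.V) := by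
          have := natψ (W'.fv (Φf v)) M (hMv' _) (Φf v) hrefl
          exact this
        have h4 : Ψf (Φf v) = ((I.ψ (W'.fv (Φf v))) ⟨Φf v, hrefl⟩ : W.V) := hval
        rw [linv v] at h4
        have hy2 : W.fv (((I.ψ (W'.fv (Φf v))) ⟨Φf v, hrefl⟩ : W.V))
            ≤ W'.fv (Φf v) + ε := ((I.ψ (W'.fv (Φf v))) ⟨Φf v, hrefl⟩).2
        rw [← h4] at hy2
        linarith
      · -- W'.fv (Φf v) ≤ W.fv v + ε
        have hval : Φf v = ((I.φ (W.fv v)) ⟨v, hrefl2⟩ : W'.V) := by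
          have := natφ (W.fv v) M (hMv v) v hrefl2
          exact this
        have hy2 : W'.fv (((I.φ (W.fv v)) ⟨v, hrefl2⟩ : W'.V))
            ≤ W.fv v + ε := ((I.φ (W.fv v)) ⟨v, hrefl2⟩).2
        rw [← hval] at hy2
        linarith
    · -- edge bounds
      intro e he
      induction e using Sym2.ind with
      | _ a b =>
        simp only [RelIso.coe_fn_mk, Equiv.coe_fn_mk]
        have hab : W.G.Adj a b := (SimpleGraph.mem_edgeSet W.G).1 he
        have hab' : W'.G.Adj (Φf a) (Φf b) := Φadj a b hab
        have he' : s(Φf a, Φf b) ∈ W'.G.edgeSet := hab'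
        rw [Sym2.map_pair_eq, abs_sub_le_iff]
        have hva : W.fv a ≤ W.fe s(a, b) :=
          W.compat _ he _ (Sym2.mem_mk_left _ _)
        have hvb : W.fv b ≤ W.fe s(a, b) :=
          W.compat _ he _ (Sym2.mem_mk_right _ _)
        have hva' : W'.fv (Φf a) ≤ W'.fe s(Φf a, Φf b) :=
          W'.compat _ he' _ (Sym2.mem_mk_left _ _)
        have hvb' : W'.fv (Φf b) ≤ W'.fe s(Φf a, Φf b) :=
          W'.compat _ he' _ (Sym2.mem_mk_right _ _)
        constructor
        · -- W.fe s(a,b) ≤ W'.fe s(Φf a, Φf b) + ε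
          set u' := W'.fe s(Φf a, Φf b) with hu'
          have h1 : (W'.filt u').coe.Adj ⟨Φf a, hva'⟩ ⟨Φf b, hvb'⟩ :=
            ⟨hab', le_refl _⟩
          have h2 := ((I.ψ u').map_rel h1).2
          have hvala : ((I.ψ u') ⟨Φf a, hva'⟩ : W.V) = a := by
            have := natψ u' M (hMe' _) (Φf a) hva'
            have h4 : Ψf (Φf a) = ((I.ψ u') ⟨Φf a, hva'⟩ : W.V) := by
              have h5 : ((I.ψ M) ⟨Φf a, hMv' _⟩ : W.V)
                  = ((I.ψ u') ⟨Φf a, hva'⟩ : W.V) := by exact this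
              exact h5
            rw [linv a] at h4; exact h4.symm
          have hvalb : ((I.ψ u') ⟨Φf b, hvb'⟩ : W.V) = b := by
            have := natψ u' M (hMe' _) (Φf b) hvb'
            have h4 : Ψf (Φf b) = ((I.ψ u') ⟨Φf b, hvb'⟩ : W.V) := by
              have h5 : ((I.ψ M) ⟨Φf b, hMv' _⟩ : W.V)
                  = ((I.ψ u') ⟨Φf b, hvb'⟩ : W.V) := by exact this
              exact h5
            rw [linv b] at h4; exact h4.symm
          rw [hvala, hvalb] at h2
          linarith [h2]
        · -- W'.fe s(Φf a, Φf b) ≤ W.fe s(a,b) + ε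
          set u := W.fe s(a, b) with hu
          have h1 : (W.filt u).coe.Adj ⟨a, hva⟩ ⟨b, hvb⟩ := ⟨hab, le_refl _⟩
          have h2 := ((I.φ u).map_rel h1).2
          have hvala : ((I.φ u) ⟨a, hva⟩ : W'.V) = Φf a := by
            have := natφ u M (hMe _) a hva
            have h5 : ((I.φ M) ⟨a, hMv _⟩ : W'.V) = ((I.φ u) ⟨a, hva⟩ : W'.V) := by
              exact this
            exact h5.symm
          have hvalb : ((I.φ u) ⟨b, hvb⟩ : W'.V) = Φf b := by
            have := natφ u M (hMe _) b hvb
            have h5 : ((I.φ M) ⟨b, hMv _⟩ : W'.V) = ((I.φ u) ⟨b, hvb⟩ : W'.V) := by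
              exact this
            exact h5.symm
          rw [hvala, hvalb] at h2
          linarith [h2]
  · rintro ⟨φ, hv, he⟩
    have hv1 : ∀ v, W'.fv (φ v) ≤ W.fv v + ε := by
      intro v; have := abs_le.1 (hv v); linarith [this.1]
    have hv2 : ∀ v' : W'.V, W.fv (φ.symm v') ≤ W'.fv v' + ε := by
      intro v'
      have := abs_le.1 (hv (φ.symm v'))
      rw [φ.apply_symm_apply] at this
      linarith [this.2]
    have he1 : ∀ a b, W.G.Adj a b → W'.fe s(φ a, φ b) ≤ W.fe s(a, b) + ε := by
      intro a b hab
      have := abs_le.1 (he s(a, b) hab)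
      rw [Sym2.map_pair_eq] at this
      linarith [this.1]
    have he2 : ∀ a b, W'.G.Adj a b →
        W.fe s(φ.symm a, φ.symm b) ≤ W'.fe s(a, b) + ε := by
      intro a b hab
      have hadj : W.G.Adj (φ.symm a) (φ.symm b) := φ.symm.map_rel_iff.2 hab
      have := abs_le.1 (he s(φ.symm a, φ.symm b) hadj)
      rw [Sym2.map_pair_eq, φ.apply_symm_apply, φ.apply_symm_apply] at this
      linarith [this.2]
    refine ⟨⟨hε, mkHom W W' ε φ hv1 he1, mkHom W' W ε φ.symm hv2 he2,
      ?_, ?_, ?_, ?_, ?_, ?_⟩⟩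
    · intro w x y h
      exact Subtype.ext (φ.injective (Subtype.ext_iff.1 h))
    · intro w x y h
      exact Subtype.ext (φ.symm.injective (Subtype.ext_iff.1 h))
    · intro w
      exact DFunLike.ext _ _ fun x => Subtype.ext (φ.symm_apply_apply x.1)
    · intro w
      exact DFunLike.ext _ _ fun x => Subtype.ext (φ.apply_symm_apply x.1)
    · intro a b h
      exact DFunLike.ext _ _ fun x => Subtype.ext rfl
    · intro a b h
      exact DFunLike.ext _ _ fun x => Subtype.ext rfl
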